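/- arXiv:2007.15598 — 2 statements merged into one kernel-verified Lean document; each statement's English description precedes it below -/
import Mathlib

section
/- Fix a round q ∈ {1, …, K}, a confidence level ϖ ∈ (0, 1), and θ > 0. Assume the loss is bounded: 0 ≤ Q(b, y, x) ≤ M for all b ∈ Λ with M > 0. Assume ρ_1, …, ρ_K are i.i.d. and integrable, and that each centered variable ρ_j − E[ρ_j] is σ²-subgaussian with σ² ≤ θ M² / m. Then with probability at least 1 − ϖ, simultaneously for all b ∈ Λ: R_s(b, q) ≤ R_t(b, q) + 2·E[ρ_1] + 2·M·√(θ · log(1/ϖ) / m). -/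
open MeasureTheory ProbabilityTheory

/-! K-fold cross-validation setup: `n = K * m` i.i.d. data points `z i`, folds of
size `m` (fold `j` consists of indices `i < K*m` with `i / m = j`), a countable model
class `Λ` with nonnegative loss `Q`, population error `popErr`, round-`q` prediction
error `Rs` (on fold `q`) and training error `Rt` (on the other `K - 1` folds), and the
per-fold supremum deviation `rho`. -/

/-- Fold `j`: the data indices `i < K * m` with `i / m = j`. -/
def fold (K m j : ℕ) : Finset ℕ :=
  (Finset.range (K * m)).filter (fun i => i / m = j)

/-- Round-`q` prediction error of model `b` (empirical error on the validation fold `q`). -/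
noncomputable def Rs {Ω E Λ : Type*} (K m : ℕ) (z : ℕ → Ω → E) (Q : Λ → E → ℝ)
    (b : Λ) (q : ℕ) (ω : Ω) : ℝ :=
  (1 / (m : ℝ)) * ∑ i ∈ fold K m q, Q b (z i ω)

/-- Round-`q` training error of model `b` (empirical error on the other `K - 1` folds). -/
noncomputable def Rt {Ω E Λ : Type*} (K m : ℕ) (z : ℕ → Ω → E) (Q : Λ → E → ℝ)
    (b : Λ) (q : ℕ) (ω : Ω) : ℝ :=
  (1 / ((K * m - m : ℕ) : ℝ)) *
    ∑ i ∈ (Finset.range (K * m)).filter (fun i => i / m ≠ q), Q b (z i ω)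

/-- Population error of model `b`. -/
noncomputable def popErr {Ω E Λ : Type*} [MeasurableSpace Ω] (P : Measure Ω)
    (z : ℕ → Ω → E) (Q : Λ → E → ℝ) (b : Λ) : ℝ :=
  ∫ ω, Q b (z 0 ω) ∂P

/-- `ρ j`: supremum over the model class of the absolute deviation of the empirical
error on fold `j` from the population error. -/
noncomputable def rho {Ω E Λ : Type*} [MeasurableSpace Ω] (P : Measure Ω)
    (K m : ℕ) (z : ℕ → Ω → E) (Q : Λ → E → ℝ) (j : ℕ) (ω : Ω) : ℝ :=
  ⨆ b : Λ, |Rs K m z Q b j ω - popErr P z Q b|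

lemma fold_eq_Ico {K m j : ℕ} (hm : 1 ≤ m) (hj : j < K) :
    fold K m j = Finset.Ico (j * m) (j * m + m) := by
  ext i
  simp only [fold, Finset.mem_filter, Finset.mem_range, Finset.mem_Ico]
  constructor
  · rintro ⟨h1, h2⟩
    have e := Nat.div_add_mod i m
    have hr : i % m < m := Nat.mod_lt _ hm
    rw [h2] at e
    constructor
    · calc j * m = m * j := mul_comm _ _
        _ ≤ m * j + i % m := Nat.le_add_right _ _
        _ = i := e
    · calc i = m * j + i % m := e.symm
        _ < m * j + m := by omega
        _ = j * m + m := by ring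
  · rintro ⟨h1, h2⟩
    have h3 : i / m = j := Nat.div_eq_of_lt_le h1 (by rw [Nat.succ_mul]; omega)
    refine ⟨?_, h3⟩
    calc i < j * m + m := h2
      _ = (j+1) * m := by ring
      _ ≤ K * m := Nat.mul_le_mul_right _ hj

lemma fold_card {K m j : ℕ} (hm : 1 ≤ m) (hj : j < K) : (fold K m j).card = m := by
  rw [fold_eq_Ico hm hj, Nat.card_Ico]; omega

lemma mem_fold_lt {K m j i : ℕ} (h : i ∈ fold K m j) : i < K * m :=
  Finset.mem_range.mp (Finset.mem_filter.mp h).1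

lemma sum_train {K m q : ℕ} (f : ℕ → ℝ) :
    ∑ i ∈ (Finset.range (K*m)).filter (fun i => i / m ≠ q), f i
      = ∑ j ∈ (Finset.range K).erase q, ∑ i ∈ fold K m j, f i := by
  rw [← Finset.sum_fiberwise_of_maps_to (g := fun i => i / m)
      (t := (Finset.range K).erase q) ?_ f]
  · refine Finset.sum_congr rfl fun j hj => ?_
    obtain ⟨hjq, hjK⟩ := Finset.mem_erase.mp hj
    congr 1
    ext i
    simp only [fold, Finset.mem_filter, Finset.mem_range]
    constructor
    · rintro ⟨⟨h1, h2⟩, h3⟩; exact ⟨h1, h3⟩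
    · rintro ⟨h1, h3⟩; exact ⟨⟨h1, h3 ▸ hjq⟩, h3⟩
  · intro i hi
    obtain ⟨h1, h2⟩ := Finset.mem_filter.mp hi
    refine Finset.mem_erase.mpr ⟨h2, Finset.mem_range.mpr ?_⟩
    exact Nat.div_lt_of_lt_mul (by rw [mul_comm]; exact Finset.mem_range.mp h1)

/-- **Upper bound for the round-`q` prediction error, bounded-loss case.**
If the loss is bounded by `M > 0` and each centered `ρ j - E[ρ j]` is `σ²`-subgaussian
with `σ² ≤ θ M² / m`, then with probability at least `1 - ϖ`, simultaneously for all
`b ∈ Λ`, `Rs b q ≤ Rt b q + 2 E[ρ 0] + 2 M √(θ log(1/ϖ) / m)`. -/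
theorem round_q_bound_bounded_loss
    {Ω E Λ : Type*} [MeasurableSpace Ω] [MeasurableSpace E] [Countable Λ] [Nonempty Λ]
    (P : Measure Ω) [IsProbabilityMeasure P]
    (K m : ℕ) (hK : 2 ≤ K) (hm : 1 ≤ m)
    (z : ℕ → Ω → E)
    (hz_meas : ∀ i < K * m, Measurable (z i))
    (hz_indep : iIndepFun
      (fun i : Fin (K * m) => z i) P)
    (hz_ident : ∀ i < K * m, P.map (z i) = P.map (z 0))
    (Q : Λ → E → ℝ)
    (hQ_meas : ∀ b, Measurable (Q b))
    (hQ_nonneg : ∀ b e, 0 ≤ Q b e)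
    (hQ_L2 : ∀ b, MemLp (fun ω => Q b (z 0 ω)) 2 P)
    (q : ℕ) (hq : q < K)
    (ϖ θ M σ : ℝ) (hϖ : ϖ ∈ Set.Ioo (0 : ℝ) 1) (hθ : 0 < θ) (hM : 0 < M)
    (hQ_bdd : ∀ b e, Q b e ≤ M)
    (hρ_indep : iIndepFun
      (fun j : Fin K => rho P K m z Q j) P)
    (hρ_ident : ∀ j < K, P.map (rho P K m z Q j) = P.map (rho P K m z Q 0))
    (hρ_int : ∀ j < K, Integrable (rho P K m z Q j) P)
    (hσ2 : σ ^ 2 ≤ θ * M ^ 2 / m)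
    (hsub : ∀ j < K, ∀ lam : ℝ,
      ∫ ω, Real.exp (lam * (rho P K m z Q j ω - ∫ ω', rho P K m z Q j ω' ∂P)) ∂P
        ≤ Real.exp (lam ^ 2 * σ ^ 2 / 2)) :
    (P {ω | ∀ b : Λ,
        Rs K m z Q b q ω ≤ Rt K m z Q b q ω
          + 2 * (∫ ω', rho P K m z Q 0 ω' ∂P)
          + 2 * M * Real.sqrt (θ * Real.log (1 / ϖ) / m)}).toReal
      ≥ 1 - ϖ := by
  classical
  obtain ⟨hϖ0, hϖ1⟩ := hϖ
  have hm0 : (0:ℝ) < m := by exact_mod_cast hm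
  have hK1 : (1:ℝ) < K := by exact_mod_cast (by omega : 1 < K)
  have hK1' : (0:ℝ) < (K:ℝ) - 1 := by linarith
  have hK2 : (2:ℝ) ≤ K := by exact_mod_cast hK
  have hKm1cast : ((K - 1 : ℕ) : ℝ) = (K:ℝ) - 1 := by
    rw [Nat.cast_sub (by omega : 1 ≤ K), Nat.cast_one]
  -- measurability
  have hRs_meas : ∀ (b : Λ) (j : ℕ), Measurable (fun ω => Rs K m z Q b j ω) := by
    intro b j
    unfold Rs
    apply Measurable.const_mul
    apply Finset.measurable_sum
    intro i hi
    exact (hQ_meas b).comp (hz_meas i (mem_fold_lt hi))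
  have hρ_meas : ∀ j : ℕ, Measurable (rho P K m z Q j) := by
    intro j
    unfold rho
    exact Measurable.iSup fun b => ((hRs_meas b j).sub measurable_const).abs
  have hRt_meas : ∀ b : Λ, Measurable (fun ω => Rt K m z Q b q ω) := by
    intro b
    unfold Rt
    apply Measurable.const_mul
    apply Finset.measurable_sum
    intro i hi
    have : i < K * m := Finset.mem_range.mp (Finset.mem_filter.mp hi).1
    exact (hQ_meas b).comp (hz_meas i this)
  -- bounds
  have hQint : ∀ b, Integrable (fun ω => Q b (z 0 ω)) P := fun b =>
    (hQ_L2 b).integrable one_le_two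
  have hpop0 : ∀ b, 0 ≤ popErr P z Q b := fun b =>
    integral_nonneg fun ω => hQ_nonneg b _
  have hpopM : ∀ b, popErr P z Q b ≤ M := by
    intro b
    have h := integral_mono (hQint b) (integrable_const M) (fun ω => hQ_bdd b _)
    simpa [popErr] using h
  have hRs0 : ∀ (b : Λ) (j : ℕ) ω, 0 ≤ Rs K m z Q b j ω := by
    intro b j ω
    apply mul_nonneg (by positivity)
    exact Finset.sum_nonneg fun i _ => hQ_nonneg b _
  have hRsM : ∀ (b : Λ) (j : ℕ), j < K → ∀ ω, Rs K m z Q b j ω ≤ M := by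
    intro b j hj ω
    unfold Rs
    have hsum : ∑ i ∈ fold K m j, Q b (z i ω) ≤ (fold K m j).card • M :=
      Finset.sum_le_card_nsmul _ _ _ fun i _ => hQ_bdd b _
    rw [fold_card hm hj, nsmul_eq_mul] at hsum
    rw [one_div]
    calc (m:ℝ)⁻¹ * ∑ i ∈ fold K m j, Q b (z i ω) ≤ (m:ℝ)⁻¹ * ((m:ℝ) * M) :=
          mul_le_mul_of_nonneg_left hsum (by positivity)
      _ = M := by field_simp
  have habs : ∀ (b : Λ) (j : ℕ), j < K → ∀ ω,
      |Rs K m z Q b j ω - popErr P z Q b| ≤ M := by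
    intro b j hj ω
    rw [abs_sub_le_iff]
    constructor
    · linarith [hRsM b j hj ω, hpop0 b]
    · linarith [hRs0 b j ω, hpopM b]
  have hbdd : ∀ (j : ℕ), j < K → ∀ ω,
      BddAbove (Set.range fun b : Λ => |Rs K m z Q b j ω - popErr P z Q b|) := by
    intro j hj ω
    exact ⟨M, by rintro x ⟨b, rfl⟩; exact habs b j hj ω⟩
  have hρ_le : ∀ (b : Λ) (j : ℕ), j < K → ∀ ω,
      |Rs K m z Q b j ω - popErr P z Q b| ≤ rho P K m z Q j ω := by
    intro b j hj ω; exact le_ciSup (hbdd j hj ω) b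
  have hρ_nonneg : ∀ (j : ℕ), j < K → ∀ ω, 0 ≤ rho P K m z Q j ω := by
    intro j hj ω
    obtain ⟨b⟩ := ‹Nonempty Λ›
    exact (abs_nonneg _).trans (hρ_le b j hj ω)
  have hρ_M : ∀ (j : ℕ), j < K → ∀ ω, rho P K m z Q j ω ≤ M := by
    intro j hj ω; exact ciSup_le fun b => habs b j hj ω
  -- equal means
  set c : ℝ := ∫ ω', rho P K m z Q 0 ω' ∂P with hcdef
  have hmean : ∀ j, j < K → ∫ ω, rho P K m z Q j ω ∂P = c := by
    intro j hj
    have hjm : AEMeasurable (rho P K m z Q j) P := (hρ_meas j).aemeasurable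
    have h0m : AEMeasurable (rho P K m z Q 0) P := (hρ_meas 0).aemeasurable
    calc ∫ ω, rho P K m z Q j ω ∂P = ∫ x, id x ∂(P.map (rho P K m z Q j)) :=
        (integral_map hjm aestronglyMeasurable_id).symm
      _ = ∫ x, id x ∂(P.map (rho P K m z Q 0)) := by rw [hρ_ident j hj]
      _ = c := integral_map h0m aestronglyMeasurable_id
  -- weights
  set w : ℝ := ((K:ℝ) - 1)⁻¹ with hwdef
  have hw0 : 0 < w := inv_pos.mpr hK1'
  have hw1 : w ≤ 1 := by
    rw [hwdef]
    exact inv_le_one_of_one_le₀ (by linarith)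
  have hwK : w * ((K:ℝ) - 1) = 1 := inv_mul_cancel₀ hK1'.ne'
  set a : ℕ → ℝ := fun j => if j = q then 1 else w with hadef
  have ha0 : ∀ j, 0 ≤ a j := by
    intro j; rw [hadef]; dsimp only; split
    · exact zero_le_one
    · exact hw0.le
  have ha1 : ∀ j, a j ≤ 1 := by
    intro j; rw [hadef]; dsimp only; split
    · exact le_refl 1
    · exact hw1
  set Y : Fin K → Ω → ℝ := fun j ω => a j * (rho P K m z Q j ω - c) with hYdef
  have hY_meas : ∀ j : Fin K, Measurable (Y j) := by
    intro j; rw [hYdef]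
    exact ((hρ_meas j).sub measurable_const).const_mul _
  have hY_indep : iIndepFun Y P := by
    rw [hYdef]
    exact hρ_indep.comp (fun j : Fin K => fun x : ℝ => a ↑j * (x - c))
      (fun j => (measurable_id.sub measurable_const).const_mul _)
  have hY_bdd : ∀ (lam : ℝ) (j : Fin K) (ω : Ω), lam * Y j ω ≤ |lam| * (M + |c|) := by
    intro lam j ω
    have h1 : |rho P K m z Q ↑j ω - c| ≤ M + |c| := by
      calc |rho P K m z Q ↑j ω - c| = |rho P K m z Q ↑j ω + -c| := by rw [sub_eq_add_neg]
        _ ≤ |rho P K m z Q ↑j ω| + |-c| := abs_add_le _ _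
        _ = |rho P K m z Q ↑j ω| + |c| := by rw [abs_neg]
        _ ≤ M + |c| := by
            have h2 := hρ_nonneg j j.isLt ω
            have h3 := hρ_M j j.isLt ω
            rw [abs_of_nonneg h2]; linarith
    calc lam * Y j ω ≤ |lam * Y j ω| := le_abs_self _
      _ = |lam| * (a ↑j * |rho P K m z Q ↑j ω - c|) := by
          rw [hYdef]; dsimp only
          rw [abs_mul, abs_mul, abs_of_nonneg (ha0 _)]
      _ ≤ |lam| * (1 * (M + |c|)) := by
          refine mul_le_mul_of_nonneg_left ?_ (abs_nonneg _)
          exact mul_le_mul (ha1 _) h1 (abs_nonneg _) zero_le_one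
      _ = |lam| * (M + |c|) := by ring
  have hexp_int : ∀ (lam : ℝ) (j : Fin K),
      Integrable (fun ω => Real.exp (lam * Y j ω)) P := by
    intro lam j
    refine (integrable_const (Real.exp (|lam| * (M + |c|)))).mono'
      (((hY_meas j).const_mul lam).exp).aestronglyMeasurable ?_
    refine Filter.Eventually.of_forall fun ω => ?_
    rw [Real.norm_eq_abs, Real.abs_exp]
    exact Real.exp_le_exp.mpr (hY_bdd lam j ω)
  -- mgf bounds
  set σB : ℝ := θ * M^2 / m with hσBdef
  have hσB : 0 < σB := by rw [hσBdef]; positivity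
  have hmgfY : ∀ (lam : ℝ) (j : Fin K),
      mgf (Y j) P lam ≤ Real.exp ((lam * a ↑j)^2 * σ^2 / 2) := by
    intro lam j
    have h := hsub ↑j j.isLt (lam * a ↑j)
    rw [hmean ↑j j.isLt] at h
    refine le_trans (le_of_eq ?_) h
    simp only [mgf]
    refine integral_congr_ae (Filter.Eventually.of_forall fun ω => ?_)
    rw [hYdef]; dsimp only
    congr 1; ring
  have hsuma : ∑ j : Fin K, a ↑j ^ 2 = 1 + w := by
    rw [Fin.sum_univ_eq_sum_range (fun j => a j ^ 2) K]
    have hqmem : q ∈ Finset.range K := Finset.mem_range.mpr hq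
    rw [← Finset.add_sum_erase _ (fun j => a j ^ 2) hqmem]
    have h1 : a q = 1 := by rw [hadef]; exact if_pos rfl
    have h2 : ∀ i ∈ (Finset.range K).erase q, a i ^ 2 = w ^ 2 := by
      intro i hi
      rw [hadef]; dsimp only
      rw [if_neg (Finset.mem_erase.mp hi).1]
    rw [Finset.sum_congr rfl h2, Finset.sum_const, Finset.card_erase_of_mem hqmem,
      Finset.card_range, nsmul_eq_mul, h1, hKm1cast, hwdef]
    field_simp
  have hmgfS : ∀ lam : ℝ, mgf (∑ j : Fin K, Y j) P lam ≤ Real.exp (lam^2 * σB) := by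
    intro lam
    rw [hY_indep.mgf_sum hY_meas Finset.univ]
    calc ∏ j : Fin K, mgf (Y j) P lam
        ≤ ∏ j : Fin K, Real.exp ((lam * a ↑j)^2 * σ^2 / 2) :=
          Finset.prod_le_prod (fun j _ => mgf_nonneg) (fun j _ => hmgfY lam j)
      _ = Real.exp (∑ j : Fin K, (lam * a ↑j)^2 * σ^2 / 2) := by rw [← Real.exp_sum]
      _ ≤ Real.exp (lam^2 * σB) := by
          apply Real.exp_le_exp.mpr
          have e : ∀ j : Fin K, (lam * a ↑j)^2 * σ^2 / 2 = a ↑j^2 * (lam^2 * σ^2 / 2) :=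
            fun j => by ring
          rw [Finset.sum_congr rfl (fun j _ => e j), ← Finset.sum_mul, hsuma]
          have h4 : lam^2 * σ^2 ≤ lam^2 * σB :=
            mul_le_mul_of_nonneg_left hσ2 (sq_nonneg lam)
          have h5 : 0 ≤ lam^2 * σ^2 := by positivity
          nlinarith
  -- Chernoff
  have hlog : 0 < Real.log (1/ϖ) := Real.log_pos (one_lt_one_div hϖ0 hϖ1)
  set t : ℝ := 2 * M * Real.sqrt (θ * Real.log (1/ϖ) / m) with htdef
  have harg : 0 < θ * Real.log (1/ϖ) / m := by positivity
  have hts : Real.sqrt (θ * Real.log (1/ϖ) / m) ^ 2 = θ * Real.log (1/ϖ) / m :=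
    Real.sq_sqrt harg.le
  have ht : 0 < t := by
    rw [htdef]
    have := Real.sqrt_pos.mpr harg
    positivity
  set lam : ℝ := t / (2 * σB) with hlamdef
  have hlam : 0 < lam := div_pos ht (by linarith)
  have hint : Integrable (fun ω => Real.exp (lam * (∑ j : Fin K, Y j) ω)) P :=
    hY_indep.integrable_exp_mul_sum hY_meas (fun j _ => hexp_int lam j)
  have hchern : (P {ω | t ≤ (∑ j : Fin K, Y j) ω}).toReal ≤ ϖ := by
    refine le_trans (measure_ge_le_exp_mul_mgf (μ := P) (X := ∑ j : Fin K, Y j)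
      t hlam.le hint) ?_
    calc Real.exp (-lam * t) * mgf (∑ j : Fin K, Y j) P lam
        ≤ Real.exp (-lam * t) * Real.exp (lam^2 * σB) :=
          mul_le_mul_of_nonneg_left (hmgfS lam) (Real.exp_pos _).le
      _ = Real.exp (-lam * t + lam^2 * σB) := (Real.exp_add _ _).symm
      _ = ϖ := by
          have e1 : -lam * t + lam^2 * σB = -(t^2/(4*σB)) := by
            rw [hlamdef]; field_simp; ring
          have ht2 : t^2 = 4*M^2*(θ * Real.log (1/ϖ) / m) := by
            rw [htdef, mul_pow, mul_pow, hts]; ring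
          have e2 : t^2/(4*σB) = Real.log (1/ϖ) := by
            rw [ht2, hσBdef]
            field_simp
          rw [e1, e2, Real.exp_neg, Real.exp_log (by positivity), one_div, inv_inv]
  -- deterministic inequality
  have hnt : ((K * m - m : ℕ) : ℝ) = ((K:ℝ) - 1) * m := by
    have h : K * m - m = (K - 1) * m := (Nat.sub_one_mul K m).symm
    rw [h, Nat.cast_mul, hKm1cast]
  have hRt_eq : ∀ (b : Λ) (ω : Ω), Rt K m z Q b q ω
      = w * ∑ j ∈ (Finset.range K).erase q, Rs K m z Q b j ω := by
    intro b ω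
    unfold Rt Rs
    rw [sum_train, hnt, Finset.mul_sum, Finset.mul_sum]
    refine Finset.sum_congr rfl fun j hj => ?_
    rw [hwdef, one_div, mul_inv, one_div]
    ring
  have hkey : ∀ (ω : Ω) (b : Λ), Rs K m z Q b q ω
      ≤ Rt K m z Q b q ω + 2*c + (∑ j : Fin K, Y j) ω := by
    intro ω b
    have hqmem : q ∈ Finset.range K := Finset.mem_range.mpr hq
    have hS : (∑ j : Fin K, Y j) ω
        = rho P K m z Q q ω
          + w * ∑ j ∈ (Finset.range K).erase q, rho P K m z Q j ω - 2*c := by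
      have h0 : (∑ j : Fin K, Y j) ω
          = ∑ j ∈ Finset.range K, a j * (rho P K m z Q j ω - c) := by
        rw [Finset.sum_apply, hYdef]
        exact Fin.sum_univ_eq_sum_range (fun j => a j * (rho P K m z Q j ω - c)) K
      rw [h0, ← Finset.add_sum_erase _ _ hqmem]
      have h1 : a q = 1 := by rw [hadef]; exact if_pos rfl
      have h2 : ∑ j ∈ (Finset.range K).erase q, a j * (rho P K m z Q j ω - c)
          = w * ((∑ j ∈ (Finset.range K).erase q, rho P K m z Q j ω) - ((K:ℝ)-1) * c) := by
        have hstep : ∀ j ∈ (Finset.range K).erase q,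
            a j * (rho P K m z Q j ω - c) = w * (rho P K m z Q j ω - c) := by
          intro j hj
          rw [hadef]; dsimp only; rw [if_neg (Finset.mem_erase.mp hj).1]
        rw [Finset.sum_congr rfl hstep, ← Finset.mul_sum, Finset.sum_sub_distrib,
            Finset.sum_const, Finset.card_erase_of_mem hqmem, Finset.card_range,
            nsmul_eq_mul, hKm1cast]
      rw [h1, h2]
      linear_combination (-c) * hwK
    have hub1 : Rs K m z Q b q ω - popErr P z Q b ≤ rho P K m z Q q ω :=
      (le_abs_self _).trans (hρ_le b q hq ω)
    have hpe : popErr P z Q b = w * ∑ j ∈ (Finset.range K).erase q, popErr P z Q b := by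
      rw [Finset.sum_const, Finset.card_erase_of_mem hqmem, Finset.card_range,
        nsmul_eq_mul, hKm1cast, ← mul_assoc, hwK, one_mul]
    have hub2 : popErr P z Q b - Rt K m z Q b q ω
        ≤ w * ∑ j ∈ (Finset.range K).erase q, rho P K m z Q j ω := by
      rw [hRt_eq b ω]
      have heq : w * ∑ j ∈ (Finset.range K).erase q, (popErr P z Q b - Rs K m z Q b j ω)
          = popErr P z Q b - w * ∑ j ∈ (Finset.range K).erase q, Rs K m z Q b j ω := by
        rw [Finset.sum_sub_distrib, mul_sub, ← hpe]
      rw [← heq]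
      refine mul_le_mul_of_nonneg_left (Finset.sum_le_sum fun j hj => ?_) hw0.le
      have hjK : j < K := Finset.mem_range.mp (Finset.mem_erase.mp hj).2
      calc popErr P z Q b - Rs K m z Q b j ω
          ≤ |Rs K m z Q b j ω - popErr P z Q b| := by
            rw [abs_sub_comm]; exact le_abs_self _
        _ ≤ rho P K m z Q j ω := hρ_le b j hjK ω
    linarith [hS, hub1, hub2]
  -- assemble
  set G : Set Ω := {ω | ∀ b : Λ,
      Rs K m z Q b q ω ≤ Rt K m z Q b q ω + 2 * c + t} with hGdef
  have hGmeas : MeasurableSet G := by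
    have hGeq : G = ⋂ b : Λ, {ω | Rs K m z Q b q ω ≤ Rt K m z Q b q ω + 2 * c + t} := by
      ext ω; simp [hGdef, Set.mem_iInter]
    rw [hGeq]
    exact MeasurableSet.iInter fun b =>
      measurableSet_le (hRs_meas b q) (((hRt_meas b).add_const _).add_const _)
  have hsubset : Gᶜ ⊆ {ω | t ≤ (∑ j : Fin K, Y j) ω} := by
    intro ω hω
    simp only [hGdef, Set.mem_compl_iff, Set.mem_setOf_eq, not_forall, not_le] at hω
    obtain ⟨b, hb⟩ := hω
    have h := hkey ω b
    simp only [Set.mem_setOf_eq]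
    linarith
  have hcompl : (P Gᶜ).toReal ≤ ϖ :=
    le_trans (ENNReal.toReal_mono (measure_ne_top _ _) (measure_mono hsubset)) hchern
  have hone : (P G).toReal + (P Gᶜ).toReal = 1 := by
    rw [← ENNReal.toReal_add (measure_ne_top _ _) (measure_ne_top _ _),
      measure_add_measure_compl hGmeas, measure_univ, ENNReal.toReal_one]
  show (P G).toReal ≥ 1 - ϖ
  linarith
end

section
/- Fix a round q ∈ {1, …, K} and θ > 0, and let S = sup_{b ∈ Λ} Var(Q(b, y_1, x_1)) < ∞. Assume the interchange inequalities: E[ sup_{b ∈ Λ} (R_s(b, q) − R(b))² ] ≤ θ · sup_{b ∈ Λ} E[ (R_s(b, q) − R(b))² ] and E[ sup_{b ∈ Λ} (R_t(b, q) − R(b))² ] ≤ θ · sup_{b ∈ Λ} E[ (R_t(b, q) − R(b))² ]. Then E[U_q²] ≤ θ · S · (1/√m + 1/√n_t)², and in particular Var(U_q) ≤ E[U_q²] ≤ 4θS/m. -/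
open MeasureTheory ProbabilityTheory

/-- `U q`: supremum over the model class of the absolute gap between the round-`q`
prediction and training errors. -/
noncomputable def Ugap {Ω E Λ : Type*} [Nonempty Λ] (K m : ℕ) (z : ℕ → Ω → E)
    (Q : Λ → E → ℝ) (q : ℕ) (ω : Ω) : ℝ :=
  ⨆ b : Λ, |Rs K m z Q b q ω - Rt K m z Q b q ω|


section SupHelpers

variable {Λ : Type*} [Nonempty Λ]

lemma iSup_sq_eq (x : Λ → ℝ) (hx : ∀ b, 0 ≤ x b) :
    (⨆ b, (x b) ^ 2) = (⨆ b, x b) ^ 2 := by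
  by_cases h : BddAbove (Set.range x)
  · obtain ⟨r, hr⟩ := h
    have hbd2 : BddAbove (Set.range fun b => (x b) ^ 2) := by
      refine ⟨r ^ 2, ?_⟩
      rintro _ ⟨b, rfl⟩
      exact pow_le_pow_left₀ (hx b) (hr (Set.mem_range_self b)) 2
    have h' : BddAbove (Set.range x) := ⟨r, hr⟩
    apply le_antisymm
    · exact ciSup_le fun b => pow_le_pow_left₀ (hx b) (le_ciSup h' b) 2
    · have hs : ∀ b, x b ≤ Real.sqrt (⨆ b, (x b) ^ 2) := by
        intro b
        have h1 : (x b) ^ 2 ≤ ⨆ b, (x b) ^ 2 := le_ciSup hbd2 b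
        have := Real.sqrt_le_sqrt h1
        rwa [Real.sqrt_sq (hx b)] at this
      have h2 : (⨆ b, x b) ≤ Real.sqrt (⨆ b, (x b) ^ 2) := ciSup_le hs
      calc (⨆ b, x b) ^ 2 ≤ Real.sqrt (⨆ b, (x b) ^ 2) ^ 2 :=
            pow_le_pow_left₀ (Real.iSup_nonneg hx) h2 2
        _ = ⨆ b, (x b) ^ 2 := Real.sq_sqrt (Real.iSup_nonneg fun b => sq_nonneg _)
  · have h2 : ¬ BddAbove (Set.range fun b => (x b) ^ 2) := by
      rintro ⟨r, hr⟩
      apply h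
      refine ⟨Real.sqrt r, ?_⟩
      rintro _ ⟨b, rfl⟩
      have h3 : (x b) ^ 2 ≤ r := hr (Set.mem_range_self b)
      exact (Real.le_sqrt (hx b) (le_trans (sq_nonneg _) h3)).2 h3
    rw [Real.iSup_of_not_bddAbove h, Real.iSup_of_not_bddAbove h2]
    simp

lemma iSup_div_const (v : Λ → ℝ) (h : BddAbove (Set.range v)) {t : ℝ} (ht : 0 < t) :
    (⨆ b, v b / t) = (⨆ b, v b) / t := by
  have hbd : BddAbove (Set.range fun b => v b / t) := by
    obtain ⟨r, hr⟩ := h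
    refine ⟨r / t, ?_⟩
    rintro _ ⟨b, rfl⟩
    exact div_le_div_of_nonneg_right (hr (Set.mem_range_self b)) ht.le
  apply le_antisymm
  · exact ciSup_le fun b => div_le_div_of_nonneg_right (le_ciSup h b) ht.le
  · rw [div_le_iff₀ ht]
    refine ciSup_le fun b => ?_
    calc v b = v b / t * t := (div_mul_cancel₀ _ ht.ne').symm
      _ ≤ (⨆ b, v b / t) * t := mul_le_mul_of_nonneg_right (le_ciSup hbd b) ht.le

end SupHelpers

section Tracking

open Filter Topology

variable {Ω γ₁ γ₂ Λ : Type*} [MeasurableSpace Ω] [MeasurableSpace γ₁] [MeasurableSpace γ₂]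
  [Countable Λ] [Nonempty Λ]

/-- If the family `|F b ∘ V - G b ∘ W|` is bounded while `|G b ∘ W|` is unbounded,
with `V, W` independent and a Chebyshev-type tail bound for each `F b ∘ V`, then
this event is null. -/
lemma tracking_null (P : Measure Ω) [IsProbabilityMeasure P]
    (V : Ω → γ₁) (W : Ω → γ₂) (hV : Measurable V) (hW : Measurable W)
    (hVW : IndepFun V W P)
    (F : Λ → γ₁ → ℝ) (G : Λ → γ₂ → ℝ)
    (hF : ∀ b, Measurable (F b)) (hG : ∀ b, Measurable (G b))
    (c : ℝ)
    (hcheb : ∀ b (t : ℝ), 0 < t → P {ω | t ≤ |F b (V ω)|} ≤ ENNReal.ofReal (c / t ^ 2)) :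
    P {ω | BddAbove (Set.range fun b => |F b (V ω) - G b (W ω)|) ∧
        ¬ BddAbove (Set.range fun b => |G b (W ω)|)} = 0 := by
  classical
  obtain ⟨e, he⟩ := exists_surjective_nat Λ
  have hsub : {ω | BddAbove (Set.range fun b => |F b (V ω) - G b (W ω)|) ∧
        ¬ BddAbove (Set.range fun b => |G b (W ω)|)} ⊆
      ⋃ C : ℕ, {ω | (∀ b, |F b (V ω) - G b (W ω)| ≤ C) ∧
        ∀ M : ℕ, ∃ b, (M : ℝ) ≤ |G b (W ω)|} := by
    rintro ω ⟨⟨r, hr⟩, hnb⟩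
    refine Set.mem_iUnion.2 ⟨⌈r⌉₊, fun b => ?_, fun M => ?_⟩
    · exact le_trans (hr (Set.mem_range_self b)) (Nat.le_ceil r)
    · obtain ⟨y, ⟨b, rfl⟩, hy⟩ := not_bddAbove_iff.1 hnb (M : ℝ)
      exact ⟨b, hy.le⟩
  refine measure_mono_null hsub (measure_iUnion_null fun C => ?_)
  set SC := {ω | (∀ b, |F b (V ω) - G b (W ω)| ≤ C) ∧
      ∀ M : ℕ, ∃ b, (M : ℝ) ≤ |G b (W ω)|} with hSC
  have key : ∀ j : ℕ, 1 ≤ j → P SC ≤ ENNReal.ofReal (c / (j : ℝ) ^ 2) := by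
    intro j hj
    have hjpos : (0 : ℝ) < j := by exact_mod_cast hj
    set M : ℝ := (C : ℝ) + j with hM
    set Tset : ℕ → Set γ₂ := fun n => {w | M ≤ |G (e n) w| ∧ ∀ k < n, |G (e k) w| < M}
      with hTset
    set Aset : ℕ → Set γ₁ := fun n => {v | (j : ℝ) ≤ |F (e n) v|} with hAset
    have hTmeas : ∀ n, MeasurableSet (Tset n) := by
      intro n
      have heq : Tset n = {w | M ≤ |G (e n) w|} ∩ ⋂ k ∈ Finset.range n, {w | |G (e k) w| < M} := by
        ext w
        simp [hTset, Finset.mem_range]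
      rw [heq]
      exact (measurableSet_le measurable_const (hG (e n)).abs).inter
        (MeasurableSet.biInter (Set.to_countable _)
          fun k _ => measurableSet_lt (hG (e k)).abs measurable_const)
    have hAmeas : ∀ n, MeasurableSet (Aset n) :=
      fun n => measurableSet_le measurable_const (hF (e n)).abs
    have hsub2 : SC ⊆ ⋃ n, V ⁻¹' Aset n ∩ W ⁻¹' Tset n := by
      intro ω hω
      obtain ⟨h1, h2⟩ := hω
      obtain ⟨b, hb⟩ := h2 (C + j)
      obtain ⟨n₀, rfl⟩ := he b
      have hex : ∃ n, M ≤ |G (e n) (W ω)| := ⟨n₀, by push_cast at hb ⊢; linarith⟩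
      set n := Nat.find hex with hn
      have hYn : M ≤ |G (e n) (W ω)| := Nat.find_spec hex
      refine Set.mem_iUnion.2 ⟨n, ?_, ?_⟩
      · have hD : |F (e n) (V ω) - G (e n) (W ω)| ≤ C := h1 (e n)
        have h6 : |G (e n) (W ω)| - |F (e n) (V ω)| ≤ |G (e n) (W ω) - F (e n) (V ω)| :=
          abs_sub_abs_le_abs_sub _ _
        rw [abs_sub_comm] at h6
        simp only [Set.mem_preimage, hAset, Set.mem_setOf_eq]
        linarith
      · exact ⟨Nat.find_spec hex, fun k hk => not_le.1 (Nat.find_min hex hk)⟩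
    have hdisjT : Pairwise (Function.onFun Disjoint fun n => W ⁻¹' Tset n) := by
      have key2 : ∀ {a b : ℕ}, a < b → Disjoint (W ⁻¹' Tset a) (W ⁻¹' Tset b) := by
        intro a b hab
        rw [Set.disjoint_left]
        intro ω ha hb'
        exact absurd ha.1 (not_le.2 (hb'.2 a hab))
      intro a b hab
      rcases hab.lt_or_gt with h | h
      exacts [key2 h, (key2 h).symm]
    calc P SC ≤ P (⋃ n, V ⁻¹' Aset n ∩ W ⁻¹' Tset n) := measure_mono hsub2
      _ ≤ ∑' n, P (V ⁻¹' Aset n ∩ W ⁻¹' Tset n) := measure_iUnion_le _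
      _ ≤ ∑' n, ENNReal.ofReal (c / (j : ℝ) ^ 2) * P (W ⁻¹' Tset n) := by
          refine ENNReal.tsum_le_tsum fun n => ?_
          rw [hVW.measure_inter_preimage_eq_mul _ _ (hAmeas n) (hTmeas n)]
          exact mul_le_mul_left (hcheb (e n) j hjpos) _
      _ = ENNReal.ofReal (c / (j : ℝ) ^ 2) * ∑' n, P (W ⁻¹' Tset n) := ENNReal.tsum_mul_left
      _ ≤ ENNReal.ofReal (c / (j : ℝ) ^ 2) * 1 := by
          refine mul_le_mul_right ?_ _
          rw [← measure_iUnion hdisjT fun n => hW (hTmeas n)]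
          exact prob_le_one
      _ = ENNReal.ofReal (c / (j : ℝ) ^ 2) := mul_one _
  have hzero : Tendsto (fun j : ℕ => ENNReal.ofReal (c / (j : ℝ) ^ 2)) atTop (nhds 0) := by
    have h1 : Tendsto (fun j : ℕ => c / (j : ℝ) ^ 2) atTop (nhds 0) := by
      apply Tendsto.div_atTop tendsto_const_nhds
      exact Tendsto.comp (tendsto_pow_atTop (two_ne_zero)) tendsto_natCast_atTop_atTop
    simpa using ENNReal.tendsto_ofReal h1
  have hle : P SC ≤ 0 :=
    ge_of_tendsto hzero (eventually_atTop.2 ⟨1, fun j hj => key j hj⟩)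
  exact le_antisymm hle zero_le

end Tracking

open scoped ENNReal

section Abstract

variable {Ω γ₁ γ₂ Λ : Type*} [MeasurableSpace Ω] [MeasurableSpace γ₁] [MeasurableSpace γ₂]
  [Countable Λ] [Nonempty Λ]

/-- If the gap `sup_b |F b ∘ V - G b ∘ W|` is square integrable and some uniform-boundedness
event of the `G` side has positive probability, then `sup_b (F b ∘ V)²` is integrable. -/
lemma integrable_sup_sq_aux (P : Measure Ω) [IsProbabilityMeasure P]
    (V : Ω → γ₁) (W : Ω → γ₂) (hV : Measurable V) (hW : Measurable W)
    (hVW : IndepFun V W P)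
    (F : Λ → γ₁ → ℝ) (G : Λ → γ₂ → ℝ)
    (hF : ∀ b, Measurable (F b)) (hG : ∀ b, Measurable (G b))
    (k : ℕ)
    (hP : P {ω | ∀ b, |G b (W ω)| ≤ (k : ℝ)} ≠ 0)
    (hu2 : Integrable (fun ω => (⨆ b, |F b (V ω) - G b (W ω)|) ^ 2) P) :
    Integrable (fun ω => ⨆ b, (F b (V ω)) ^ 2) P := by
  classical
  set u : Ω → ℝ := fun ω => ⨆ b, |F b (V ω) - G b (W ω)| with hu_def
  set f : Ω → ℝ := fun ω => ⨆ b, (F b (V ω)) ^ 2 with hf_def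
  have hu0 : ∀ ω, 0 ≤ u ω := fun ω => Real.iSup_nonneg fun b => abs_nonneg _
  have hf0 : ∀ ω, 0 ≤ f ω := fun ω => Real.iSup_nonneg fun b => sq_nonneg _
  have hfa : ∀ ω, f ω = (⨆ b, |F b (V ω)|) ^ 2 := by
    intro ω
    rw [← iSup_sq_eq (fun b => |F b (V ω)|) (fun b => abs_nonneg _)]
    exact iSup_congr fun b => (sq_abs (F b (V ω))).symm
  set s : Set γ₂ := {w | ∀ b, |G b w| ≤ (k : ℝ)} with hs_def
  have hsmeas : MeasurableSet s := by
    have : s = ⋂ b, {w | |G b w| ≤ (k : ℝ)} := by ext w; simp [hs_def]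
    rw [this]
    exact MeasurableSet.iInter fun b => measurableSet_le (hG b).abs measurable_const
  -- pointwise bound on the event s
  have hfbound : ∀ ω, W ω ∈ s → f ω ≤ 2 * u ω ^ 2 + 2 * (k : ℝ) ^ 2 := by
    intro ω hω
    by_cases hbX : BddAbove (Set.range fun b => |F b (V ω)|)
    · have hbD : BddAbove (Set.range fun b => |F b (V ω) - G b (W ω)|) := by
        obtain ⟨r, hr⟩ := hbX
        refine ⟨r + k, ?_⟩
        rintro _ ⟨b, rfl⟩
        have h1 : |F b (V ω)| ≤ r := hr (Set.mem_range_self b)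
        have h2 : |G b (W ω)| ≤ k := hω b
        have := abs_sub (F b (V ω)) (G b (W ω))
        linarith
      have hXb : ∀ b, |F b (V ω)| ≤ u ω + k := by
        intro b
        have h1 := abs_sub_abs_le_abs_sub (F b (V ω)) (G b (W ω))
        have h2 : |F b (V ω) - G b (W ω)| ≤ u ω := le_ciSup hbD b
        have h3 : |G b (W ω)| ≤ k := hω b
        linarith
      have hak : (⨆ b, |F b (V ω)|) ≤ u ω + k := ciSup_le hXb
      have ha0 : (0:ℝ) ≤ ⨆ b, |F b (V ω)| := Real.iSup_nonneg fun b => abs_nonneg _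
      rw [hfa ω]
      have hsq : (⨆ b, |F b (V ω)|) ^ 2 ≤ (u ω + (k : ℝ)) ^ 2 := pow_le_pow_left₀ ha0 hak 2
      nlinarith [hu0 ω, Nat.cast_nonneg (α := ℝ) k, sq_nonneg (u ω - (k : ℝ))]
    · rw [hfa ω, Real.iSup_of_not_bddAbove hbX]
      nlinarith [sq_nonneg (u ω), sq_nonneg ((k : ℝ)), hu0 ω]
  -- independence and lintegral
  have hfVmeas : Measurable fun v : γ₁ => ⨆ b, (F b v) ^ 2 :=
    Measurable.iSup fun b => (hF b).pow_const 2
  have hfmeas : Measurable f := hfVmeas.comp hV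
  set φ : Ω → ℝ≥0∞ := fun ω => ENNReal.ofReal (f ω) with hφ_def
  set ψ : Ω → ℝ≥0∞ := fun ω => s.indicator (1 : γ₂ → ℝ≥0∞) (W ω) with hψ_def
  have hφmeas : Measurable φ := (ENNReal.measurable_ofReal.comp hfVmeas).comp hV
  have hψmeas : Measurable ψ :=
    ((measurable_const.indicator hsmeas)).comp hW
  have hind : IndepFun φ ψ P := by
    exact hVW.comp (ENNReal.measurable_ofReal.comp hfVmeas) (measurable_const.indicator hsmeas)
  have hlm : ∫⁻ ω, φ ω * ψ ω ∂P = (∫⁻ ω, φ ω ∂P) * ∫⁻ ω, ψ ω ∂P := by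
    have := ProbabilityTheory.lintegral_mul_eq_lintegral_mul_lintegral_of_indepFun
      hφmeas hψmeas hind
    simpa [Pi.mul_apply] using this
  have hψint : ∫⁻ ω, ψ ω ∂P = P (W ⁻¹' s) := by
    have hgcomp : ψ = (W ⁻¹' s).indicator (1 : Ω → ℝ≥0∞) := by
      funext ω
      by_cases hω : W ω ∈ s
      · simp [hψ_def, Set.indicator_of_mem hω, Set.indicator_of_mem (Set.mem_preimage.2 hω)]
      · simp [hψ_def, Set.indicator_of_notMem hω,
          Set.indicator_of_notMem (fun h => hω (Set.mem_preimage.1 h))]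
    rw [hgcomp, lintegral_indicator_one (hW hsmeas)]
  have hbound : ∀ ω, φ ω * ψ ω ≤ ENNReal.ofReal (2 * u ω ^ 2 + 2 * (k : ℝ) ^ 2) := by
    intro ω
    by_cases hω : W ω ∈ s
    · rw [hψ_def]
      simp only [Set.indicator_of_mem hω, Pi.one_apply, mul_one]
      exact ENNReal.ofReal_le_ofReal (hfbound ω hω)
    · rw [hψ_def]
      simp only [Set.indicator_of_notMem hω, mul_zero]
      exact zero_le
  have hup : ∫⁻ ω, ENNReal.ofReal (2 * u ω ^ 2 + 2 * (k : ℝ) ^ 2) ∂P < ⊤ := by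
    have h2 : Integrable (fun ω => 2 * u ω ^ 2 + 2 * (k : ℝ) ^ 2) P :=
      (hu2.const_mul 2).add (integrable_const _)
    exact h2.lintegral_lt_top
  have hfin : (∫⁻ ω, φ ω ∂P) * P (W ⁻¹' s) < ⊤ := by
    rw [← hψint, ← hlm]
    exact lt_of_le_of_lt (lintegral_mono hbound) hup
  have hlf : ∫⁻ ω, φ ω ∂P < ⊤ := by
    by_contra hcon
    rw [not_lt, top_le_iff] at hcon
    have hPs : P (W ⁻¹' s) ≠ 0 := hP
    rw [hcon, ENNReal.top_mul hPs] at hfin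
    exact absurd hfin (lt_irrefl _)
  refine ⟨hfmeas.aestronglyMeasurable, ?_⟩
  rw [hasFiniteIntegral_iff_ofReal (Filter.Eventually.of_forall hf0)]
  exact hlf

end Abstract

section AbstractMain

variable {Ω γ₁ γ₂ Λ : Type*} [MeasurableSpace Ω] [MeasurableSpace γ₁] [MeasurableSpace γ₂]
  [Countable Λ] [Nonempty Λ]

lemma abstract_second_moment (P : Measure Ω) [IsProbabilityMeasure P]
    (V : Ω → γ₁) (W : Ω → γ₂) (hV : Measurable V) (hW : Measurable W)
    (hVW : IndepFun V W P)
    (F : Λ → γ₁ → ℝ) (G : Λ → γ₂ → ℝ)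
    (hF : ∀ b, Measurable (F b)) (hG : ∀ b, Measurable (G b))
    (c₁ c₂ A B : ℝ) (hA : 0 ≤ A) (hB : 0 ≤ B)
    (hchebF : ∀ b (t : ℝ), 0 < t → P {ω | t ≤ |F b (V ω)|} ≤ ENNReal.ofReal (c₁ / t ^ 2))
    (hchebG : ∀ b (t : ℝ), 0 < t → P {ω | t ≤ |G b (W ω)|} ≤ ENNReal.ofReal (c₂ / t ^ 2))
    (hfA : ∫ ω, (⨆ b, (F b (V ω)) ^ 2) ∂P ≤ A)
    (hgB : ∫ ω, (⨆ b, (G b (W ω)) ^ 2) ∂P ≤ B) :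
    ∫ ω, (⨆ b, |F b (V ω) - G b (W ω)|) ^ 2 ∂P ≤ (Real.sqrt A + Real.sqrt B) ^ 2 := by
  classical
  set u : Ω → ℝ := fun ω => ⨆ b, |F b (V ω) - G b (W ω)| with hu_def
  set a : Ω → ℝ := fun ω => ⨆ b, |F b (V ω)| with ha_def
  set c : Ω → ℝ := fun ω => ⨆ b, |G b (W ω)| with hc_def
  have hu0 : ∀ ω, 0 ≤ u ω := fun ω => Real.iSup_nonneg fun b => abs_nonneg _
  have ha0 : ∀ ω, 0 ≤ a ω := fun ω => Real.iSup_nonneg fun b => abs_nonneg _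
  have hc0 : ∀ ω, 0 ≤ c ω := fun ω => Real.iSup_nonneg fun b => abs_nonneg _
  have hfa : ∀ ω, (⨆ b, (F b (V ω)) ^ 2) = a ω ^ 2 := by
    intro ω
    rw [ha_def, ← iSup_sq_eq (fun b => |F b (V ω)|) (fun b => abs_nonneg _)]
    exact iSup_congr fun b => (sq_abs (F b (V ω))).symm
  have hgc : ∀ ω, (⨆ b, (G b (W ω)) ^ 2) = c ω ^ 2 := by
    intro ω
    rw [hc_def, ← iSup_sq_eq (fun b => |G b (W ω)|) (fun b => abs_nonneg _)]
    exact iSup_congr fun b => (sq_abs (G b (W ω))).symm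
  have huV : Measurable u :=
    Measurable.iSup fun b => (((hF b).comp hV).sub ((hG b).comp hW)).abs
  have haV : Measurable a := (Measurable.iSup fun b : Λ => (hF b).abs).comp hV
  have hcV : Measurable c := (Measurable.iSup fun b : Λ => (hG b).abs).comp hW
  by_cases hu2 : Integrable (fun ω => u ω ^ 2) P
  swap
  · rw [integral_undef hu2]
    positivity
  -- null sets
  have N1 : P {ω | BddAbove (Set.range fun b => |F b (V ω) - G b (W ω)|) ∧
      ¬ BddAbove (Set.range fun b => |G b (W ω)|)} = 0 :=
    tracking_null P V W hV hW hVW F G hF hG c₁ hchebF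
  have N2 : P {ω | BddAbove (Set.range fun b => |F b (V ω) - G b (W ω)|) ∧
      ¬ BddAbove (Set.range fun b => |F b (V ω)|)} = 0 := by
    have h := tracking_null P W V hW hV hVW.symm G F hG hF c₂ hchebG
    have hset : {ω | BddAbove (Set.range fun b => |F b (V ω) - G b (W ω)|) ∧
        ¬ BddAbove (Set.range fun b => |F b (V ω)|)} =
        {ω | BddAbove (Set.range fun b => |G b (W ω) - F b (V ω)|) ∧
        ¬ BddAbove (Set.range fun b => |F b (V ω)|)} := by
      ext ω
      have : (fun b => |F b (V ω) - G b (W ω)|) = fun b => |G b (W ω) - F b (V ω)| := by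
        funext b; rw [abs_sub_comm]
      rw [Set.mem_setOf_eq, Set.mem_setOf_eq, this]
    rw [hset]
    exact h
  have hae : ∀ᵐ ω ∂P, BddAbove (Set.range fun b => |F b (V ω) - G b (W ω)|) →
      (BddAbove (Set.range fun b => |F b (V ω)|) ∧
       BddAbove (Set.range fun b => |G b (W ω)|)) := by
    rw [ae_iff]
    refine measure_mono_null (fun ω hω => ?_) (measure_union_null N2 N1)
    simp only [Set.mem_setOf_eq] at hω
    rw [Classical.not_imp] at hω
    obtain ⟨h1', h2'⟩ := hω
    rcases not_and_or.1 h2' with h | h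
    · exact Or.inl ⟨h1', h⟩
    · exact Or.inr ⟨h1', h⟩
  have haeu : ∀ᵐ ω ∂P, u ω ≤ a ω + c ω := by
    filter_upwards [hae] with ω h
    by_cases hD : BddAbove (Set.range fun b => |F b (V ω) - G b (W ω)|)
    · obtain ⟨hXb, hYb⟩ := h hD
      refine ciSup_le fun b => ?_
      calc |F b (V ω) - G b (W ω)| ≤ |F b (V ω)| + |G b (W ω)| := abs_sub _ _
        _ ≤ a ω + c ω := add_le_add (le_ciSup hXb b) (le_ciSup hYb b)
    · rw [hu_def]
      simp only
      rw [Real.iSup_of_not_bddAbove hD]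
      exact add_nonneg (ha0 ω) (hc0 ω)
  -- finishing helper when u is a.e. zero
  have hfinish : (∀ᵐ ω ∂P, u ω = 0) →
      ∫ ω, u ω ^ 2 ∂P ≤ (Real.sqrt A + Real.sqrt B) ^ 2 := by
    intro h0
    have hz : (fun ω => u ω ^ 2) =ᵐ[P] fun _ => (0 : ℝ) := by
      filter_upwards [h0] with ω h
      rw [h]; ring
    rw [integral_congr_ae hz, integral_zero]
    positivity
  by_cases hGV : ∀ k : ℕ, P {ω | ∀ b, |F b (V ω)| ≤ (k : ℝ)} = 0
  · -- the validation-side family is a.e. unbounded; then u = 0 a.e.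
    refine hfinish ?_
    have hnull : P {ω | BddAbove (Set.range fun b => |F b (V ω)|)} = 0 := by
      refine measure_mono_null ?_ (measure_iUnion_null fun k : ℕ => hGV k)
      rintro ω ⟨r, hr⟩
      exact Set.mem_iUnion.2 ⟨⌈r⌉₊, fun b =>
        le_trans (hr (Set.mem_range_self b)) (Nat.le_ceil r)⟩
    have hX_unbdd : ∀ᵐ ω ∂P, ¬ BddAbove (Set.range fun b => |F b (V ω)|) := by
      rw [ae_iff]
      simpa only [not_not] using hnull
    have hN2' : ∀ᵐ ω ∂P, ¬ (BddAbove (Set.range fun b => |F b (V ω) - G b (W ω)|) ∧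
        ¬ BddAbove (Set.range fun b => |F b (V ω)|)) := by
      rw [ae_iff]
      simpa only [not_not] using N2
    filter_upwards [hX_unbdd, hN2'] with ω h1 h2
    have hD : ¬ BddAbove (Set.range fun b => |F b (V ω) - G b (W ω)|) :=
      fun hD => h2 ⟨hD, h1⟩
    rw [hu_def]
    simp only
    exact Real.iSup_of_not_bddAbove hD
  push_neg at hGV
  obtain ⟨k₁, hk₁⟩ := hGV
  by_cases hGT : ∀ k : ℕ, P {ω | ∀ b, |G b (W ω)| ≤ (k : ℝ)} = 0
  · refine hfinish ?_
    have hnull : P {ω | BddAbove (Set.range fun b => |G b (W ω)|)} = 0 := by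
      refine measure_mono_null ?_ (measure_iUnion_null fun k : ℕ => hGT k)
      rintro ω ⟨r, hr⟩
      exact Set.mem_iUnion.2 ⟨⌈r⌉₊, fun b =>
        le_trans (hr (Set.mem_range_self b)) (Nat.le_ceil r)⟩
    have hY_unbdd : ∀ᵐ ω ∂P, ¬ BddAbove (Set.range fun b => |G b (W ω)|) := by
      rw [ae_iff]
      simpa only [not_not] using hnull
    have hN1' : ∀ᵐ ω ∂P, ¬ (BddAbove (Set.range fun b => |F b (V ω) - G b (W ω)|) ∧
        ¬ BddAbove (Set.range fun b => |G b (W ω)|)) := by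
      rw [ae_iff]
      simpa only [not_not] using N1
    filter_upwards [hY_unbdd, hN1'] with ω h1 h2
    have hD : ¬ BddAbove (Set.range fun b => |F b (V ω) - G b (W ω)|) :=
      fun hD => h2 ⟨hD, h1⟩
    rw [hu_def]
    simp only
    exact Real.iSup_of_not_bddAbove hD
  push_neg at hGT
  obtain ⟨k₂, hk₂⟩ := hGT
  -- integrability of the sup-squares
  have hfint : Integrable (fun ω => ⨆ b, (F b (V ω)) ^ 2) P :=
    integrable_sup_sq_aux P V W hV hW hVW F G hF hG k₂ hk₂ hu2
  have hgint : Integrable (fun ω => ⨆ b, (G b (W ω)) ^ 2) P := by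
    have hu2' : Integrable (fun ω => (⨆ b, |G b (W ω) - F b (V ω)|) ^ 2) P := by
      have : (fun ω => (⨆ b, |G b (W ω) - F b (V ω)|) ^ 2) = fun ω => u ω ^ 2 := by
        funext ω
        rw [hu_def]
        simp only
        congr 1
        exact iSup_congr fun b => abs_sub_comm _ _
      rw [this]
      exact hu2
    exact integrable_sup_sq_aux P W V hW hV hVW.symm G F hG hF k₁ hk₁ hu2'
  have haint2 : Integrable (fun ω => a ω ^ 2) P := by
    have : (fun ω => a ω ^ 2) = fun ω => ⨆ b, (F b (V ω)) ^ 2 := by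
      funext ω; rw [hfa ω]
    rw [this]; exact hfint
  have hcint2 : Integrable (fun ω => c ω ^ 2) P := by
    have : (fun ω => c ω ^ 2) = fun ω => ⨆ b, (G b (W ω)) ^ 2 := by
      funext ω; rw [hgc ω]
    rw [this]; exact hgint
  have hamem : MemLp a 2 P := (memLp_two_iff_integrable_sq haV.aestronglyMeasurable).2 haint2
  have hcmem : MemLp c 2 P := (memLp_two_iff_integrable_sq hcV.aestronglyMeasurable).2 hcint2
  have haI : Integrable a P := hamem.integrable one_le_two
  have hcI : Integrable c P := hcmem.integrable one_le_two
  have hIa2 : ∫ ω, a ω ^ 2 ∂P ≤ A := by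
    have heq : (fun ω => a ω ^ 2) = fun ω => ⨆ b, (F b (V ω)) ^ 2 := by
      funext ω; rw [hfa ω]
    rw [heq]; exact hfA
  have hIc2 : ∫ ω, c ω ^ 2 ∂P ≤ B := by
    have heq : (fun ω => c ω ^ 2) = fun ω => ⨆ b, (G b (W ω)) ^ 2 := by
      funext ω; rw [hgc ω]
    rw [heq]; exact hgB
  have hIa : ∫ ω, a ω ∂P ≤ Real.sqrt A := by
    have hva := variance_nonneg a P
    rw [variance_eq_sub hamem] at hva
    simp only [Pi.pow_apply] at hva
    have h2 : (∫ ω, a ω ∂P) ^ 2 ≤ A := by nlinarith [hIa2]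
    exact (Real.le_sqrt (integral_nonneg ha0) hA).2 h2
  have hIc : ∫ ω, c ω ∂P ≤ Real.sqrt B := by
    have hvc := variance_nonneg c P
    rw [variance_eq_sub hcmem] at hvc
    simp only [Pi.pow_apply] at hvc
    have h2 : (∫ ω, c ω ∂P) ^ 2 ≤ B := by nlinarith [hIc2]
    exact (Real.le_sqrt (integral_nonneg hc0) hB).2 h2
  have hacind : IndepFun a c P :=
    hVW.comp (Measurable.iSup fun b : Λ => (hF b).abs)
      (Measurable.iSup fun b : Λ => (hG b).abs)
  have hacI : Integrable (fun ω => a ω * c ω) P := by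
    have := hacind.integrable_mul haI hcI
    exact this
  have hacEq : ∫ ω, a ω * c ω ∂P = (∫ ω, a ω ∂P) * ∫ ω, c ω ∂P := by
    have := hacind.integral_fun_mul_eq_mul_integral haI.aestronglyMeasurable hcI.aestronglyMeasurable
    exact this
  have hsq_int : Integrable (fun ω => (a ω + c ω) ^ 2) P := by
    have heq : (fun ω => (a ω + c ω) ^ 2) = fun ω => a ω ^ 2 + 2 * (a ω * c ω) + c ω ^ 2 := by
      funext ω; ring
    rw [heq]
    exact (haint2.add (hacI.const_mul 2)).add hcint2
  have hmono : ∫ ω, u ω ^ 2 ∂P ≤ ∫ ω, (a ω + c ω) ^ 2 ∂P := by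
    refine integral_mono_ae hu2 hsq_int ?_
    filter_upwards [haeu] with ω h
    have h1 := hu0 ω; have h2 := ha0 ω; have h3 := hc0 ω
    nlinarith
  have hexp : ∫ ω, (a ω + c ω) ^ 2 ∂P =
      ∫ ω, a ω ^ 2 ∂P + 2 * ((∫ ω, a ω ∂P) * ∫ ω, c ω ∂P) + ∫ ω, c ω ^ 2 ∂P := by
    have heq : (fun ω => (a ω + c ω) ^ 2) = fun ω => a ω ^ 2 + 2 * (a ω * c ω) + c ω ^ 2 := by
      funext ω; ring
    rw [heq, integral_add (f := fun ω => a ω ^ 2 + 2 * (a ω * c ω))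
          (g := fun ω => c ω ^ 2) (haint2.add (hacI.const_mul 2)) hcint2,
        integral_add (f := fun ω => a ω ^ 2) (g := fun ω => 2 * (a ω * c ω))
          haint2 (hacI.const_mul 2),
        integral_const_mul, hacEq]
  have hfinal : ∫ ω, (a ω + c ω) ^ 2 ∂P ≤ (Real.sqrt A + Real.sqrt B) ^ 2 := by
    rw [hexp]
    have hprod : (∫ ω, a ω ∂P) * ∫ ω, c ω ∂P ≤ Real.sqrt A * Real.sqrt B :=
      mul_le_mul hIa hIc (integral_nonneg hc0) (Real.sqrt_nonneg A)
    have hsq : (Real.sqrt A + Real.sqrt B) ^ 2 =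
        A + 2 * (Real.sqrt A * Real.sqrt B) + B := by
      rw [add_sq, Real.sq_sqrt hA, Real.sq_sqrt hB]
      ring
    rw [hsq]
    linarith
  exact le_trans hmono hfinal

end AbstractMain

/-- **Second-moment bound for the round-`q` error gap.** -/
theorem second_moment_bound_Ugap
    {Ω E Λ : Type*} [MeasurableSpace Ω] [MeasurableSpace E] [Countable Λ] [Nonempty Λ]
    (P : Measure Ω) [IsProbabilityMeasure P]
    (K m : ℕ) (hK : 2 ≤ K) (hm : 1 ≤ m)
    (z : ℕ → Ω → E)
    (hz_meas : ∀ i < K * m, Measurable (z i))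
    (hz_indep : iIndepFun
      (fun i : Fin (K * m) => z i) P)
    (hz_ident : ∀ i < K * m, P.map (z i) = P.map (z 0))
    (Q : Λ → E → ℝ)
    (hQ_meas : ∀ b, Measurable (Q b))
    (hQ_nonneg : ∀ b e, 0 ≤ Q b e)
    (hQ_L2 : ∀ b, MemLp (fun ω => Q b (z 0 ω)) 2 P)
    (q : ℕ) (hq : q < K)
    (θ S : ℝ) (hθ : 0 < θ)
    (hSbdd : BddAbove (Set.range fun b : Λ => variance (fun ω => Q b (z 0 ω)) P))
    (hS : S = ⨆ b : Λ, variance (fun ω => Q b (z 0 ω)) P)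
    (hint_s : ∫ ω, (⨆ b : Λ, (Rs K m z Q b q ω - popErr P z Q b) ^ 2) ∂P
      ≤ θ * ⨆ b : Λ, ∫ ω, (Rs K m z Q b q ω - popErr P z Q b) ^ 2 ∂P)
    (hint_t : ∫ ω, (⨆ b : Λ, (Rt K m z Q b q ω - popErr P z Q b) ^ 2) ∂P
      ≤ θ * ⨆ b : Λ, ∫ ω, (Rt K m z Q b q ω - popErr P z Q b) ^ 2 ∂P) :
    (∫ ω, (Ugap K m z Q q ω) ^ 2 ∂P
      ≤ θ * S * (1 / Real.sqrt m + 1 / Real.sqrt ((K * m - m : ℕ))) ^ 2)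
    ∧ variance (Ugap K m z Q q) P ≤ ∫ ω, (Ugap K m z Q q ω) ^ 2 ∂P
    ∧ ∫ ω, (Ugap K m z Q q ω) ^ 2 ∂P ≤ 4 * θ * S / m := by
  classical
  have hm0 : 0 < m := hm
  have hmR : (0 : ℝ) < m := by exact_mod_cast hm0
  have hn0 : 0 < K * m := Nat.mul_pos (by omega) hm0
  have hmnt : m ≤ K * m - m := by
    have : 2 * m ≤ K * m := Nat.mul_le_mul_right m hK
    omega
  have hnt0 : 0 < K * m - m := lt_of_lt_of_le hm0 hmnt
  have hntR : (0 : ℝ) < ((K * m - m : ℕ) : ℝ) := by exact_mod_cast hnt0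
  have hS0 : 0 ≤ S := by
    rw [hS]
    exact Real.iSup_nonneg fun b => variance_nonneg _ _
  have hθS : 0 ≤ θ * S := mul_nonneg hθ.le hS0
  -- fold facts
  have hfold_eq : fold K m q = Finset.Ico (q * m) (q * m + m) := by
    ext i
    simp only [fold, Finset.mem_filter, Finset.mem_range, Finset.mem_Ico]
    constructor
    · rintro ⟨hilt, hdiv⟩
      constructor
      · calc q * m = i / m * m := by rw [hdiv]
          _ ≤ i := Nat.div_mul_le_self i m
      · have h1 : m * (i / m) + i % m = i := Nat.div_add_mod i m
        have h2 : i % m < m := Nat.mod_lt i hm0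
        rw [hdiv] at h1
        calc i = m * q + i % m := h1.symm
          _ < m * q + m := by omega
          _ = q * m + m := by rw [mul_comm]
    · rintro ⟨hlo, hhi⟩
      have hdiv : i / m = q := by
        refine Nat.div_eq_of_lt_le hlo ?_
        rw [Nat.succ_mul]
        exact hhi
      refine ⟨?_, hdiv⟩
      calc i < q * m + m := hhi
        _ = (q + 1) * m := by ring
        _ ≤ K * m := Nat.mul_le_mul_right m (by omega)
  have hfold_card : (fold K m q).card = m := by
    rw [hfold_eq, Nat.card_Ico]
    omega
  have hfold_lt : ∀ i ∈ fold K m q, i < K * m :=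
    fun i hi => Finset.mem_range.1 (Finset.mem_filter.1 hi).1
  have htset_lt : ∀ i ∈ (Finset.range (K * m)).filter (fun i => i / m ≠ q), i < K * m :=
    fun i hi => Finset.mem_range.1 (Finset.mem_filter.1 hi).1
  have htset_card : ((Finset.range (K * m)).filter (fun i => i / m ≠ q)).card = K * m - m := by
    have h1 : (Finset.range (K * m)).filter (fun i => i / m ≠ q)
        = Finset.range (K * m) \ fold K m q := by
      rw [fold]
      exact Finset.filter_not _ _
    have h2 : fold K m q ⊆ Finset.range (K * m) := by
      rw [fold]
      exact Finset.filter_subset _ _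
    rw [h1, Finset.card_sdiff_of_subset h2, Finset.card_range, hfold_card]
  -- transported facts for single observations
  have hmap : ∀ i, i < K * m → ∀ φ : E → ℝ, Measurable φ →
      ∫ ω, φ (z i ω) ∂P = ∫ ω, φ (z 0 ω) ∂P := by
    intro i hi φ hφ
    rw [← integral_map (hz_meas i hi).aemeasurable hφ.aestronglyMeasurable, hz_ident i hi,
      integral_map (hz_meas 0 hn0).aemeasurable hφ.aestronglyMeasurable]
  have hmemQ : ∀ b, ∀ i, i < K * m → MemLp (fun ω => Q b (z i ω)) 2 P := by
    intro b i hi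
    have h0 : MemLp (Q b) 2 (P.map (z 0)) :=
      (memLp_map_measure_iff (hQ_meas b).aestronglyMeasurable
        (hz_meas 0 hn0).aemeasurable).2 (hQ_L2 b)
    rw [← hz_ident i hi] at h0
    exact (memLp_map_measure_iff (hQ_meas b).aestronglyMeasurable
      (hz_meas i hi).aemeasurable).1 h0
  have hintQ : ∀ b, ∀ i, i < K * m → ∫ ω, Q b (z i ω) ∂P = popErr P z Q b :=
    fun b i hi => hmap i hi (Q b) (hQ_meas b)
  have hvarQ : ∀ b, ∀ i, i < K * m →
      variance (fun ω => Q b (z i ω)) P = variance (fun ω => Q b (z 0 ω)) P := by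
    intro b i hi
    rw [variance_eq_sub (hmemQ b i hi), variance_eq_sub (hmemQ b 0 hn0)]
    simp only [Pi.pow_apply]
    rw [hmap i hi (fun e => Q b e ^ 2) ((hQ_meas b).pow_const 2), hmap i hi (Q b) (hQ_meas b)]
  have hvarQS : ∀ b, variance (fun ω => Q b (z 0 ω)) P ≤ S := by
    intro b
    rw [hS]
    exact le_ciSup hSbdd b
  -- empirical means over an index set
  have hemp : ∀ s : Finset ℕ, (∀ i ∈ s, i < K * m) → 0 < s.card → ∀ b : Λ,
      MemLp (fun ω => (1 / (s.card : ℝ)) * ∑ i ∈ s, Q b (z i ω)) 2 P ∧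
      ∫ ω, (1 / (s.card : ℝ)) * ∑ i ∈ s, Q b (z i ω) ∂P = popErr P z Q b ∧
      variance (fun ω => (1 / (s.card : ℝ)) * ∑ i ∈ s, Q b (z i ω)) P
        = variance (fun ω => Q b (z 0 ω)) P / s.card := by
    intro s hs hcard b
    have hcR : (0 : ℝ) < s.card := by exact_mod_cast hcard
    have hsum_eq : (fun ω => ∑ i ∈ s, Q b (z i ω)) = ∑ i ∈ s, (fun ω => Q b (z i ω)) := by
      funext ω
      rw [Finset.sum_apply]
    have hsum_mem : MemLp (fun ω => ∑ i ∈ s, Q b (z i ω)) 2 P := by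
      rw [hsum_eq]
      exact memLp_finsetSum' s fun i hi => hmemQ b i (hs i hi)
    have hmem : MemLp (fun ω => (1 / (s.card : ℝ)) * ∑ i ∈ s, Q b (z i ω)) 2 P :=
      hsum_mem.const_mul _
    refine ⟨hmem, ?_, ?_⟩
    · rw [integral_const_mul, integral_finset_sum s
        (fun i hi => (hmemQ b i (hs i hi)).integrable one_le_two),
        Finset.sum_congr rfl (fun i hi => hintQ b i (hs i hi)), Finset.sum_const,
        nsmul_eq_mul]
      field_simp
    · have hrw : (fun ω => (1 / (s.card : ℝ)) * ∑ i ∈ s, Q b (z i ω))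
          = fun ω => (1 / (s.card : ℝ)) * (∑ i ∈ s, fun ω' => Q b (z i ω')) ω := by
        funext ω
        rw [Finset.sum_apply]
      have hpair : Set.Pairwise ↑s fun i j =>
          IndepFun (fun ω => Q b (z i ω)) (fun ω => Q b (z j ω)) P := by
        intro i hi j hj hij
        have hi' : i < K * m := hs i (Finset.mem_coe.1 hi)
        have hj' : j < K * m := hs j (Finset.mem_coe.1 hj)
        have hne : (⟨i, hi'⟩ : Fin (K * m)) ≠ ⟨j, hj'⟩ := by
          simp only [Ne, Fin.mk.injEq]
          exact hij
        exact (hz_indep.indepFun hne).comp (hQ_meas b) (hQ_meas b)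
      rw [hrw, variance_const_mul,
        IndepFun.variance_sum (fun i hi => hmemQ b i (hs i hi)) hpair,
        Finset.sum_congr rfl (fun i hi => hvarQ b i (hs i hi)), Finset.sum_const,
        nsmul_eq_mul]
      field_simp
  -- specialize to Rs
  have hcardf : 0 < (fold K m q).card := by rw [hfold_card]; exact hm0
  have hRs_eq : ∀ b : Λ, Rs K m z Q b q
      = fun ω => (1 / ((fold K m q).card : ℝ)) * ∑ i ∈ fold K m q, Q b (z i ω) := by
    intro b
    rw [hfold_card]
    rfl
  have hRs_mem : ∀ b, MemLp (Rs K m z Q b q) 2 P := by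
    intro b
    rw [hRs_eq b]
    exact (hemp (fold K m q) hfold_lt hcardf b).1
  have hRs_int : ∀ b, ∫ ω, Rs K m z Q b q ω ∂P = popErr P z Q b := by
    intro b
    rw [hRs_eq b]
    exact (hemp (fold K m q) hfold_lt hcardf b).2.1
  have hRs_var : ∀ b, variance (Rs K m z Q b q) P
      = variance (fun ω => Q b (z 0 ω)) P / m := by
    intro b
    rw [hRs_eq b, hfold_card]
    have h := (hemp (fold K m q) hfold_lt hcardf b).2.2
    rw [hfold_card] at h
    exact h
  -- specialize to Rt
  have hcardt : 0 < ((Finset.range (K * m)).filter (fun i => i / m ≠ q)).card := by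
    rw [htset_card]
    exact hnt0
  have hRt_eq : ∀ b : Λ, Rt K m z Q b q
      = fun ω => (1 / (((Finset.range (K * m)).filter (fun i => i / m ≠ q)).card : ℝ))
          * ∑ i ∈ (Finset.range (K * m)).filter (fun i => i / m ≠ q), Q b (z i ω) := by
    intro b
    rw [htset_card]
    rfl
  have hRt_mem : ∀ b, MemLp (Rt K m z Q b q) 2 P := by
    intro b
    rw [hRt_eq b]
    exact (hemp _ htset_lt hcardt b).1
  have hRt_int : ∀ b, ∫ ω, Rt K m z Q b q ω ∂P = popErr P z Q b := by
    intro b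
    rw [hRt_eq b]
    exact (hemp _ htset_lt hcardt b).2.1
  have hRt_var : ∀ b, variance (Rt K m z Q b q) P
      = variance (fun ω => Q b (z 0 ω)) P / ((K * m - m : ℕ) : ℝ) := by
    intro b
    rw [hRt_eq b, htset_card]
    have h := (hemp _ htset_lt hcardt b).2.2
    rw [htset_card] at h
    exact h
  -- second moments of the deviations
  have hRs_sq : ∀ b, ∫ ω, (Rs K m z Q b q ω - popErr P z Q b) ^ 2 ∂P
      = variance (fun ω => Q b (z 0 ω)) P / m := by
    intro b
    have h2 : ∫ ω, (Rs K m z Q b q ω - popErr P z Q b) ^ 2 ∂P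
        = variance (Rs K m z Q b q) P := by
      rw [variance_eq_integral (hRs_mem b).1.aemeasurable]
      rw [hRs_int b]
    rw [h2, hRs_var b]
  have hRt_sq : ∀ b, ∫ ω, (Rt K m z Q b q ω - popErr P z Q b) ^ 2 ∂P
      = variance (fun ω => Q b (z 0 ω)) P / ((K * m - m : ℕ) : ℝ) := by
    intro b
    have h2 : ∫ ω, (Rt K m z Q b q ω - popErr P z Q b) ^ 2 ∂P
        = variance (Rt K m z Q b q) P := by
      rw [variance_eq_integral (hRt_mem b).1.aemeasurable]
      rw [hRt_int b]
    rw [h2, hRt_var b]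
  have hsupRs : (⨆ b, ∫ ω, (Rs K m z Q b q ω - popErr P z Q b) ^ 2 ∂P) = S / m := by
    calc (⨆ b, ∫ ω, (Rs K m z Q b q ω - popErr P z Q b) ^ 2 ∂P)
        = ⨆ b, variance (fun ω => Q b (z 0 ω)) P / (m : ℝ) := iSup_congr hRs_sq
      _ = (⨆ b, variance (fun ω => Q b (z 0 ω)) P) / m := iSup_div_const _ hSbdd hmR
      _ = S / m := by rw [hS]
  have hsupRt : (⨆ b, ∫ ω, (Rt K m z Q b q ω - popErr P z Q b) ^ 2 ∂P)
      = S / ((K * m - m : ℕ) : ℝ) := by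
    calc (⨆ b, ∫ ω, (Rt K m z Q b q ω - popErr P z Q b) ^ 2 ∂P)
        = ⨆ b, variance (fun ω => Q b (z 0 ω)) P / ((K * m - m : ℕ) : ℝ) :=
          iSup_congr hRt_sq
      _ = (⨆ b, variance (fun ω => Q b (z 0 ω)) P) / ((K * m - m : ℕ) : ℝ) :=
          iSup_div_const _ hSbdd hntR
      _ = S / ((K * m - m : ℕ) : ℝ) := by rw [hS]
  rw [hsupRs] at hint_s
  rw [hsupRt] at hint_t
  -- Chebyshev bounds
  have hchebRs : ∀ (b : Λ) (t : ℝ), 0 < t →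
      P {ω | t ≤ |Rs K m z Q b q ω - popErr P z Q b|}
        ≤ ENNReal.ofReal ((S / m) / t ^ 2) := by
    intro b t ht
    have h := meas_ge_le_variance_div_sq (hRs_mem b) ht
    rw [hRs_int b] at h
    refine le_trans h (ENNReal.ofReal_le_ofReal ?_)
    rw [hRs_var b]
    exact div_le_div_of_nonneg_right
      (div_le_div_of_nonneg_right (hvarQS b) hmR.le) (sq_nonneg t)
  have hchebRt : ∀ (b : Λ) (t : ℝ), 0 < t →
      P {ω | t ≤ |Rt K m z Q b q ω - popErr P z Q b|}
        ≤ ENNReal.ofReal ((S / ((K * m - m : ℕ) : ℝ)) / t ^ 2) := by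
    intro b t ht
    have h := meas_ge_le_variance_div_sq (hRt_mem b) ht
    rw [hRt_int b] at h
    refine le_trans h (ENNReal.ofReal_le_ofReal ?_)
    rw [hRt_var b]
    exact div_le_div_of_nonneg_right
      (div_le_div_of_nonneg_right (hvarQS b) hntR.le) (sq_nonneg t)
  -- Fin-indexed validation/training tuples
  set sVal : Finset (Fin (K * m)) := Finset.univ.filter (fun i => (i : ℕ) / m = q)
    with hsVal_def
  set sTr : Finset (Fin (K * m)) := Finset.univ.filter (fun i => ¬ (i : ℕ) / m = q)
    with hsTr_def
  have hdisj : Disjoint sVal sTr := by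
    rw [Finset.disjoint_left]
    intro i hi hi'
    rw [hsVal_def, Finset.mem_filter] at hi
    rw [hsTr_def, Finset.mem_filter] at hi'
    exact hi'.2 hi.2
  have hindVW : IndepFun (fun ω (i : sVal) => z ((i : Fin (K * m)) : ℕ) ω)
      (fun ω (i : sTr) => z ((i : Fin (K * m)) : ℕ) ω) P :=
    hz_indep.indepFun_finset sVal sTr hdisj (fun i => hz_meas i i.isLt)
  have hVmeas : Measurable (fun ω (i : sVal) => z ((i : Fin (K * m)) : ℕ) ω) :=
    measurable_pi_lambda _ (fun i => hz_meas _ (Fin.is_lt _))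
  have hWmeas : Measurable (fun ω (i : sTr) => z ((i : Fin (K * m)) : ℕ) ω) :=
    measurable_pi_lambda _ (fun i => hz_meas _ (Fin.is_lt _))
  have hVsum : ∀ (b : Λ) (ω : Ω), (∑ i : sVal, Q b (z ((i : Fin (K * m)) : ℕ) ω))
      = ∑ i ∈ fold K m q, Q b (z i ω) := by
    intro b ω
    rw [Finset.sum_coe_sort sVal (fun i : Fin (K * m) => Q b (z (i : ℕ) ω))]
    refine Finset.sum_bij (fun (i : Fin (K * m)) (_ : i ∈ sVal) => (i : ℕ)) ?_ ?_ ?_ ?_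
    · intro i hi
      rw [hsVal_def, Finset.mem_filter] at hi
      simp only [fold, Finset.mem_filter, Finset.mem_range]
      exact ⟨i.isLt, hi.2⟩
    · intro i hi j hj hij
      exact Fin.ext hij
    · intro j hj
      simp only [fold, Finset.mem_filter, Finset.mem_range] at hj
      refine ⟨⟨j, hj.1⟩, ?_, rfl⟩
      rw [hsVal_def, Finset.mem_filter]
      exact ⟨Finset.mem_univ _, hj.2⟩
    · intro i hi
      rfl
  have hWsum : ∀ (b : Λ) (ω : Ω), (∑ i : sTr, Q b (z ((i : Fin (K * m)) : ℕ) ω))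
      = ∑ i ∈ (Finset.range (K * m)).filter (fun i => i / m ≠ q), Q b (z i ω) := by
    intro b ω
    rw [Finset.sum_coe_sort sTr (fun i : Fin (K * m) => Q b (z (i : ℕ) ω))]
    refine Finset.sum_bij (fun (i : Fin (K * m)) (_ : i ∈ sTr) => (i : ℕ)) ?_ ?_ ?_ ?_
    · intro i hi
      rw [hsTr_def, Finset.mem_filter] at hi
      simp only [Finset.mem_filter, Finset.mem_range]
      exact ⟨i.isLt, hi.2⟩
    · intro i hi j hj hij
      exact Fin.ext hij
    · intro j hj
      simp only [Finset.mem_filter, Finset.mem_range] at hj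
      refine ⟨⟨j, hj.1⟩, ?_, rfl⟩
      rw [hsTr_def, Finset.mem_filter]
      exact ⟨Finset.mem_univ _, hj.2⟩
    · intro i hi
      rfl
  have hVsum' : ∀ (b : Λ) (ω : Ω),
      (1 / (m : ℝ)) * (∑ i : sVal, Q b (z ((i : Fin (K * m)) : ℕ) ω)) - popErr P z Q b
        = Rs K m z Q b q ω - popErr P z Q b := by
    intro b ω
    show _ = (1 / (m : ℝ)) * ∑ i ∈ fold K m q, Q b (z i ω) - popErr P z Q b
    rw [hVsum b ω]
  have hWsum' : ∀ (b : Λ) (ω : Ω),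
      (1 / ((K * m - m : ℕ) : ℝ)) * (∑ i : sTr, Q b (z ((i : Fin (K * m)) : ℕ) ω))
          - popErr P z Q b
        = Rt K m z Q b q ω - popErr P z Q b := by
    intro b ω
    show _ = (1 / ((K * m - m : ℕ) : ℝ)) *
        ∑ i ∈ (Finset.range (K * m)).filter (fun i => i / m ≠ q), Q b (z i ω) - popErr P z Q b
    rw [hWsum b ω]
  -- measurability of the abstract F/G
  have hFmeas : ∀ b : Λ, Measurable fun v : { x // x ∈ sVal } → E =>
      (1 / (m : ℝ)) * (∑ i, Q b (v i)) - popErr P z Q b := fun b =>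
    ((Finset.measurable_sum Finset.univ
      (fun i _ => (hQ_meas b).comp (measurable_pi_apply i))).const_mul _).sub measurable_const
  have hGmeas : ∀ b : Λ, Measurable fun w : { x // x ∈ sTr } → E =>
      (1 / ((K * m - m : ℕ) : ℝ)) * (∑ i, Q b (w i)) - popErr P z Q b := fun b =>
    ((Finset.measurable_sum Finset.univ
      (fun i _ => (hQ_meas b).comp (measurable_pi_apply i))).const_mul _).sub measurable_const
  -- transfer of Chebyshev bounds
  have hchebF' : ∀ (b : Λ) (t : ℝ), 0 < t →
      P {ω | t ≤ |(1 / (m : ℝ)) * (∑ i : sVal, Q b (z ((i : Fin (K * m)) : ℕ) ω))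
          - popErr P z Q b|}
        ≤ ENNReal.ofReal ((S / m) / t ^ 2) := by
    intro b t ht
    have hset : {ω | t ≤ |(1 / (m : ℝ)) * (∑ i : sVal, Q b (z ((i : Fin (K * m)) : ℕ) ω))
        - popErr P z Q b|}
        = {ω | t ≤ |Rs K m z Q b q ω - popErr P z Q b|} := by
      ext ω
      rw [Set.mem_setOf_eq, Set.mem_setOf_eq, hVsum' b ω]
    rw [hset]
    exact hchebRs b t ht
  have hchebG' : ∀ (b : Λ) (t : ℝ), 0 < t →
      P {ω | t ≤ |(1 / ((K * m - m : ℕ) : ℝ)) *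
          (∑ i : sTr, Q b (z ((i : Fin (K * m)) : ℕ) ω)) - popErr P z Q b|}
        ≤ ENNReal.ofReal ((S / ((K * m - m : ℕ) : ℝ)) / t ^ 2) := by
    intro b t ht
    have hset : {ω | t ≤ |(1 / ((K * m - m : ℕ) : ℝ)) *
        (∑ i : sTr, Q b (z ((i : Fin (K * m)) : ℕ) ω)) - popErr P z Q b|}
        = {ω | t ≤ |Rt K m z Q b q ω - popErr P z Q b|} := by
      ext ω
      rw [Set.mem_setOf_eq, Set.mem_setOf_eq, hWsum' b ω]
    rw [hset]
    exact hchebRt b t ht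
  -- transfer of the interchange bounds
  have hfA' : ∫ ω, (⨆ b, ((1 / (m : ℝ)) * (∑ i : sVal, Q b (z ((i : Fin (K * m)) : ℕ) ω))
      - popErr P z Q b) ^ 2) ∂P ≤ θ * (S / m) := by
    have heq : (fun ω => ⨆ b, ((1 / (m : ℝ)) *
        (∑ i : sVal, Q b (z ((i : Fin (K * m)) : ℕ) ω)) - popErr P z Q b) ^ 2)
        = fun ω => ⨆ b, (Rs K m z Q b q ω - popErr P z Q b) ^ 2 := by
      funext ω
      refine iSup_congr fun b => ?_
      rw [hVsum' b ω]
    rw [heq]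
    exact hint_s
  have hgB' : ∫ ω, (⨆ b, ((1 / ((K * m - m : ℕ) : ℝ)) *
      (∑ i : sTr, Q b (z ((i : Fin (K * m)) : ℕ) ω)) - popErr P z Q b) ^ 2) ∂P
      ≤ θ * (S / ((K * m - m : ℕ) : ℝ)) := by
    have heq : (fun ω => ⨆ b, ((1 / ((K * m - m : ℕ) : ℝ)) *
        (∑ i : sTr, Q b (z ((i : Fin (K * m)) : ℕ) ω)) - popErr P z Q b) ^ 2)
        = fun ω => ⨆ b, (Rt K m z Q b q ω - popErr P z Q b) ^ 2 := by
      funext ω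
      refine iSup_congr fun b => ?_
      rw [hWsum' b ω]
    rw [heq]
    exact hint_t
  have hA' : (0 : ℝ) ≤ θ * (S / m) := mul_nonneg hθ.le (div_nonneg hS0 hmR.le)
  have hB' : (0 : ℝ) ≤ θ * (S / ((K * m - m : ℕ) : ℝ)) :=
    mul_nonneg hθ.le (div_nonneg hS0 hntR.le)
  -- apply the abstract bound
  have main : ∫ ω, (⨆ b, |((1 / (m : ℝ)) * (∑ i : sVal, Q b (z ((i : Fin (K * m)) : ℕ) ω))
        - popErr P z Q b)
      - ((1 / ((K * m - m : ℕ) : ℝ)) * (∑ i : sTr, Q b (z ((i : Fin (K * m)) : ℕ) ω))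
        - popErr P z Q b)|) ^ 2 ∂P
      ≤ (Real.sqrt (θ * (S / m)) + Real.sqrt (θ * (S / ((K * m - m : ℕ) : ℝ)))) ^ 2 :=
    abstract_second_moment P
      (fun ω (i : sVal) => z ((i : Fin (K * m)) : ℕ) ω)
      (fun ω (i : sTr) => z ((i : Fin (K * m)) : ℕ) ω)
      hVmeas hWmeas hindVW
      (fun b v => (1 / (m : ℝ)) * (∑ i, Q b (v i)) - popErr P z Q b)
      (fun b w => (1 / ((K * m - m : ℕ) : ℝ)) * (∑ i, Q b (w i)) - popErr P z Q b)
      hFmeas hGmeas (S / m) (S / ((K * m - m : ℕ) : ℝ))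
      (θ * (S / m)) (θ * (S / ((K * m - m : ℕ) : ℝ)))
      hA' hB' hchebF' hchebG' hfA' hgB'
  have hc1 : ∫ ω, (Ugap K m z Q q ω) ^ 2 ∂P
      ≤ (Real.sqrt (θ * (S / m)) + Real.sqrt (θ * (S / ((K * m - m : ℕ) : ℝ)))) ^ 2 := by
    have heq : (fun ω => (Ugap K m z Q q ω) ^ 2) = fun ω =>
        (⨆ b, |((1 / (m : ℝ)) * (∑ i : sVal, Q b (z ((i : Fin (K * m)) : ℕ) ω))
          - popErr P z Q b)
        - ((1 / ((K * m - m : ℕ) : ℝ)) * (∑ i : sTr, Q b (z ((i : Fin (K * m)) : ℕ) ω))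
          - popErr P z Q b)|) ^ 2 := by
      funext ω
      show (⨆ b, |Rs K m z Q b q ω - Rt K m z Q b q ω|) ^ 2 = _
      congr 1
      refine iSup_congr fun b => ?_
      rw [hVsum' b ω, hWsum' b ω, sub_sub_sub_cancel_right]
    rw [heq]
    exact main
  -- numerics
  have hnum : (Real.sqrt (θ * (S / m)) + Real.sqrt (θ * (S / ((K * m - m : ℕ) : ℝ)))) ^ 2
      = θ * S * (1 / Real.sqrt m + 1 / Real.sqrt ((K * m - m : ℕ) : ℝ)) ^ 2 := by
    have h1 : Real.sqrt (θ * (S / (m : ℝ))) = Real.sqrt (θ * S) * (1 / Real.sqrt m) := by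
      rw [show θ * (S / (m : ℝ)) = (θ * S) * ((m : ℝ))⁻¹ by ring, Real.sqrt_mul hθS,
        Real.sqrt_inv, one_div]
    have h2 : Real.sqrt (θ * (S / ((K * m - m : ℕ) : ℝ)))
        = Real.sqrt (θ * S) * (1 / Real.sqrt ((K * m - m : ℕ) : ℝ)) := by
      rw [show θ * (S / ((K * m - m : ℕ) : ℝ)) = (θ * S) * (((K * m - m : ℕ) : ℝ))⁻¹ by ring,
        Real.sqrt_mul hθS, Real.sqrt_inv, one_div]
    rw [h1, h2, ← mul_add, mul_pow, Real.sq_sqrt hθS]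
  rw [hnum] at hc1
  -- conclusion 2
  have hRsMeas : ∀ b, Measurable (Rs K m z Q b q) := fun b =>
    (Finset.measurable_sum _ fun i hi =>
      (hQ_meas b).comp (hz_meas i (hfold_lt i hi))).const_mul _
  have hRtMeas : ∀ b, Measurable (Rt K m z Q b q) := fun b =>
    (Finset.measurable_sum _ fun i hi =>
      (hQ_meas b).comp (hz_meas i (htset_lt i hi))).const_mul _
  have hUmeas : Measurable (Ugap K m z Q q) :=
    Measurable.iSup fun b => ((hRsMeas b).sub (hRtMeas b)).abs
  have hc2 : variance (Ugap K m z Q q) P ≤ ∫ ω, (Ugap K m z Q q ω) ^ 2 ∂P := by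
    have h := variance_le_expectation_sq (X := Ugap K m z Q q) (μ := P)
      hUmeas.aestronglyMeasurable
    simpa only [Pi.pow_apply] using h
  -- conclusion 3
  have hsm : (0 : ℝ) < Real.sqrt m := Real.sqrt_pos.2 hmR
  have hle : 1 / Real.sqrt ((K * m - m : ℕ) : ℝ) ≤ 1 / Real.sqrt m :=
    one_div_le_one_div_of_le hsm (Real.sqrt_le_sqrt (by exact_mod_cast hmnt))
  have hnn : (0 : ℝ) ≤ 1 / Real.sqrt m + 1 / Real.sqrt ((K * m - m : ℕ) : ℝ) := by positivity
  have h4 : (1 / Real.sqrt m + 1 / Real.sqrt ((K * m - m : ℕ) : ℝ)) ^ 2 ≤ 4 / (m : ℝ) := by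
    have h5 : (1 / Real.sqrt m + 1 / Real.sqrt ((K * m - m : ℕ) : ℝ)) ^ 2
        ≤ (2 * (1 / Real.sqrt m)) ^ 2 := pow_le_pow_left₀ hnn (by linarith) 2
    have h6 : (2 * (1 / Real.sqrt m)) ^ 2 = 4 / (m : ℝ) := by
      rw [mul_pow, div_pow, one_pow, Real.sq_sqrt hmR.le]
      ring
    linarith
  have hc3 : ∫ ω, (Ugap K m z Q q ω) ^ 2 ∂P ≤ 4 * θ * S / m := by
    refine le_trans hc1 ?_
    calc θ * S * (1 / Real.sqrt m + 1 / Real.sqrt ((K * m - m : ℕ) : ℝ)) ^ 2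
        ≤ θ * S * (4 / (m : ℝ)) := mul_le_mul_of_nonneg_left h4 hθS
      _ = 4 * θ * S / m := by ring
  exact ⟨hc1, hc2, hc3⟩
end
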